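/- (Lemma 2, bounded path loss model.) Let M ≥ 2 be an integer, let λ, ρ, D > 0 and α > 2. On a probability space, let N be Poisson distributed with mean λπD², and let (R_i, E_i, S_i)_{i∈ℕ} be i.i.d. random triples, independent of N, such that for each i the coordinates R_i, E_i, S_i are mutually independent, R_i has cumulative distribution function r ↦ (r/D)² on [0, D], E_i has the exponential distribution with rate 1, and S_i has the Gamma distribution with shape M−1 and rate 1. Define γ_i = E_i / ( (1 + R_i^α)/ρ + S_i ). Then for every x > 0, P( {ω : for all i < N(ω), γ_i(ω) ≤ x} ) = exp( −(2λπ/α) e^{−x/ρ} (x+1)^{1−M} (ρ/x)^{2/α} γ_inc(2/α, x D^α / ρ) ), where γ_inc(s, X) := ∫_0^X u^{s−1} e^{−u} du denotes the lower incomplete gamma function. -/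

import Mathlib

open MeasureTheory Real Set ProbabilityTheory


lemma subst_lemma {c D α : ℝ} (hc : 0 < c) (hD : 0 < D) (hα : 2 < α) :
    α * ∫ r in Ioc (0:ℝ) D, Real.exp (-(c * r ^ α)) * r
      = c ^ (-(2/α)) * ∫ u in (0:ℝ)..(c * D ^ α), u ^ (2/α - 1) * Real.exp (-u) := by
  have hα0 : (0:ℝ) < α := by linarith
  have hDα : (0:ℝ) < D ^ α := rpow_pos_of_pos hD α
  set f : ℝ → ℝ := (Ioc (0:ℝ) (D^α)).indicator (fun u => Real.exp (-(c*u)) * u ^ (2/α - 1)) with hf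
  have key := integral_comp_rpow_Ioi f hα0.ne'
  have hL : (∫ x in Ioi (0:ℝ), (|α| * x ^ (α - 1)) • f (x ^ α))
      = α * ∫ r in Ioc (0:ℝ) D, Real.exp (-(c * r ^ α)) * r := by
    rw [abs_of_pos hα0]
    have hcong : ∀ x ∈ Ioi (0:ℝ), (α * x ^ (α - 1)) • f (x ^ α)
        = (Ioc (0:ℝ) D).indicator (fun r => α * (Real.exp (-(c * r ^ α)) * r)) x := by
      intro x hx
      rw [mem_Ioi] at hx
      rw [hf]
      by_cases hxD : x ≤ D
      · rw [indicator_of_mem (show x ^ α ∈ Ioc (0:ℝ) (D^α) from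
            ⟨rpow_pos_of_pos hx α, rpow_le_rpow hx.le hxD hα0.le⟩),
          indicator_of_mem (show x ∈ Ioc (0:ℝ) D from ⟨hx, hxD⟩)]
        have h1 : ((x:ℝ) ^ α) ^ (2/α - 1) = x ^ (2 - α) := by
          rw [← Real.rpow_mul hx.le]
          congr 1
          field_simp
        have h2 : x ^ (α - 1) * x ^ (2 - α) = x := by
          rw [← Real.rpow_add hx]
          norm_num
        rw [h1, smul_eq_mul]
        linear_combination (α * rexp (-(c * x ^ α))) * h2
      · rw [indicator_of_notMem (show x ^ α ∉ Ioc (0:ℝ) (D^α) from fun hmem =>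
            hxD ((rpow_le_rpow_iff hx.le hD.le hα0).mp hmem.2)),
          indicator_of_notMem (fun hmem => hxD hmem.2)]
        simp
    rw [setIntegral_congr_fun measurableSet_Ioi hcong, integral_indicator measurableSet_Ioc,
      Measure.restrict_restrict measurableSet_Ioc, inter_eq_left.mpr Ioc_subset_Ioi_self,
      integral_const_mul]
  have hR : (∫ u in Ioi (0:ℝ), f u)
      = ∫ u in Ioc (0:ℝ) (D^α), Real.exp (-(c*u)) * u ^ (2/α - 1) := by
    rw [hf, integral_indicator measurableSet_Ioc,
      Measure.restrict_restrict measurableSet_Ioc, inter_eq_left.mpr Ioc_subset_Ioi_self]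
  -- step 2: scaling u = w/c
  have hcong2 : ∀ u ∈ Ioc (0:ℝ) (D^α), Real.exp (-(c*u)) * u ^ (2/α - 1)
      = c ^ (1 - 2/α) * ((fun w => w ^ (2/α - 1) * Real.exp (-w)) (c * u)) := by
    intro u hu
    have hu0 : 0 < u := hu.1
    have : (c * u) ^ (2/α - 1) = c ^ (2/α - 1) * u ^ (2/α - 1) :=
      Real.mul_rpow hc.le hu0.le
    simp only [this]
    rw [← mul_assoc, ← mul_assoc, ← Real.rpow_add hc]
    norm_num
    ring
  have step2 : (∫ u in Ioc (0:ℝ) (D^α), Real.exp (-(c*u)) * u ^ (2/α - 1))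
      = c ^ (-(2/α)) * ∫ u in (0:ℝ)..(c * D ^ α), u ^ (2/α - 1) * Real.exp (-u) := by
    rw [setIntegral_congr_fun measurableSet_Ioc hcong2, integral_const_mul,
      ← intervalIntegral.integral_of_le hDα.le,
      intervalIntegral.integral_comp_mul_left (fun w => w ^ (2/α - 1) * Real.exp (-w)) hc.ne',
      mul_zero, smul_eq_mul, ← mul_assoc]
    congr 1
    rw [← Real.rpow_neg_one c, ← Real.rpow_add hc]
    congr 1
    ring
  rw [hL, hR, step2] at key
  exact key


noncomputable def rDens (D : ℝ) : Measure ℝ :=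
  volume.withDensity ((Ioc (0:ℝ) D).indicator fun r => ENNReal.ofReal (2*r/D^2))

lemma lint_base {D : ℝ} (hD : 0 < D) {b : ℝ} (hb0 : 0 ≤ b) :
    ∫⁻ r in Ioc (0:ℝ) b, ENNReal.ofReal (2*r/D^2) = ENNReal.ofReal (b^2/D^2) := by
  rw [← ofReal_integral_eq_lintegral_ofReal]
  · congr 1
    rw [← intervalIntegral.integral_of_le hb0]
    have h : ∀ r : ℝ, 2*r/D^2 = (2/D^2) * r := fun r => by ring
    simp_rw [h]
    rw [intervalIntegral.integral_const_mul, integral_id]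
    field_simp
    ring
  · exact ((continuous_const.mul continuous_id).div_const _).integrableOn_Ioc
  · exact (ae_restrict_iff' measurableSet_Ioc).2 (ae_of_all _ fun r hr => by
      have : (0:ℝ) < r := hr.1
      positivity)

lemma rDens_Iic {D : ℝ} (hD : 0 < D) {a : ℝ} (ha : 0 ≤ a) :
    rDens D (Iic a) = ENNReal.ofReal ((min D a)^2/D^2) := by
  rw [rDens, withDensity_apply _ measurableSet_Iic, lintegral_indicator measurableSet_Ioc,
    Measure.restrict_restrict measurableSet_Ioc, Ioc_inter_Iic]
  exact lint_base hD (le_min hD.le ha)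

lemma rDens_Iic_neg {D : ℝ} (hD : 0 < D) {a : ℝ} (ha : a < 0) :
    rDens D (Iic a) = 0 := by
  rw [rDens, withDensity_apply _ measurableSet_Iic, lintegral_indicator measurableSet_Ioc,
    Measure.restrict_restrict measurableSet_Ioc, Ioc_inter_Iic, min_eq_right (by linarith),
    Ioc_eq_empty (by linarith), Measure.restrict_empty, lintegral_zero_measure]

lemma rDens_prob {D : ℝ} (hD : 0 < D) : IsProbabilityMeasure (rDens D) := by
  constructor
  rw [rDens, withDensity_apply _ MeasurableSet.univ, Measure.restrict_univ,
    lintegral_indicator measurableSet_Ioc, lint_base hD hD.le, div_self (by positivity),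
    ENNReal.ofReal_one]

lemma map_eq_rDens {Ω : Type*} [MeasurableSpace Ω] (P : Measure Ω) [IsProbabilityMeasure P]
    {D : ℝ} (hD : 0 < D) {R0 : Ω → ℝ} (hm : Measurable R0)
    (hcdf : ∀ r ∈ Set.Icc (0:ℝ) D, (P {ω | R0 ω ≤ r}).toReal = (r/D)^2) :
    P.map R0 = rDens D := by
  have : IsProbabilityMeasure (P.map R0) := Measure.isProbabilityMeasure_map hm.aemeasurable
  apply Measure.ext_of_Iic
  intro a
  rw [Measure.map_apply hm measurableSet_Iic]
  have hP : ∀ r ∈ Set.Icc (0:ℝ) D, P {ω | R0 ω ≤ r} = ENNReal.ofReal ((r/D)^2) := by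
    intro r hr; rw [← hcdf r hr, ENNReal.ofReal_toReal (measure_ne_top P _)]
  rcases lt_or_ge a 0 with ha | ha
  · rw [rDens_Iic_neg hD ha]
    have h0 : P {ω | R0 ω ≤ 0} = 0 := by
      have := hP 0 ⟨le_refl 0, hD.le⟩
      simpa using this
    exact measure_mono_null (fun ω (h : R0 ω ≤ a) => le_trans h ha.le) h0
  · rcases le_or_gt a D with haD | haD
    · rw [rDens_Iic hD ha, min_eq_right haD]
      have := hP a ⟨ha, haD⟩
      rw [show (R0 ⁻¹' Iic a) = {ω | R0 ω ≤ a} from rfl, this, div_pow]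
    · rw [rDens_Iic hD ha, min_eq_left haD.le]
      have h1 : P {ω | R0 ω ≤ D} = 1 := by
        have := hP D ⟨hD.le, le_refl D⟩
        rw [div_self hD.ne'] at this
        simpa using this
      have hle : (1:ENNReal) ≤ P (R0 ⁻¹' Iic a) := by
        rw [← h1]
        exact measure_mono (fun ω (h : R0 ω ≤ D) => le_trans h haD.le)
      rw [le_antisymm prob_le_one hle, div_self (by positivity), ENNReal.ofReal_one]

lemma L_R {D α c : ℝ} (hD : 0 < D) (hα : 2 < α) (hc : 0 < c) :
    ∫⁻ r, ENNReal.ofReal (Real.exp (-(c * r ^ α))) ∂(rDens D)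
      = ENNReal.ofReal (2/(α*D^2) *
          (c ^ (-(2/α)) * ∫ u in (0:ℝ)..(c*D^α), u^(2/α-1) * Real.exp (-u))) := by
  have hα0 : (0:ℝ) < α := by linarith
  have hmg : Measurable fun r : ℝ => ENNReal.ofReal (Real.exp (-(c * r ^ α))) := by
    apply ENNReal.measurable_ofReal.comp
    fun_prop
  rw [rDens, lintegral_withDensity_eq_lintegral_mul _
    (Measurable.indicator (by fun_prop) measurableSet_Ioc) hmg]
  have hpt : ∀ r : ℝ, ((Ioc (0:ℝ) D).indicator (fun r => ENNReal.ofReal (2*r/D^2)) *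
      fun r => ENNReal.ofReal (Real.exp (-(c * r ^ α)))) r
      = (Ioc (0:ℝ) D).indicator
          (fun r => ENNReal.ofReal (Real.exp (-(c * r ^ α)) * (2*r/D^2))) r := by
    intro r
    simp only [Pi.mul_apply]
    by_cases hr : r ∈ Ioc (0:ℝ) D
    · rw [indicator_of_mem hr, indicator_of_mem hr, ← ENNReal.ofReal_mul (by
        have : (0:ℝ) < r := hr.1
        positivity)]
      congr 1
      ring
    · rw [indicator_of_notMem hr, indicator_of_notMem hr, zero_mul]
  simp_rw [hpt]
  rw [lintegral_indicator measurableSet_Ioc, ← ofReal_integral_eq_lintegral_ofReal]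
  · congr 1
    have : ∀ r ∈ Ioc (0:ℝ) D, Real.exp (-(c * r ^ α)) * (2*r/D^2)
        = (2/D^2) * (Real.exp (-(c * r ^ α)) * r) := fun r _ => by ring
    rw [setIntegral_congr_fun measurableSet_Ioc this, integral_const_mul]
    have hs := subst_lemma hc hD hα
    have hJ : (∫ r in Ioc (0:ℝ) D, Real.exp (-(c * r ^ α)) * r)
        = α⁻¹ * (c ^ (-(2/α)) * ∫ u in (0:ℝ)..(c*D^α), u^(2/α-1) * Real.exp (-u)) := by
      rw [← hs, inv_mul_cancel_left₀ hα0.ne']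
    rw [hJ]
    ring
  · apply Measure.integrableOn_of_bounded (measure_Ioc_lt_top).ne
    · apply Measurable.aestronglyMeasurable
      fun_prop
    · refine (ae_restrict_iff' measurableSet_Ioc).2 (ae_of_all _ fun r hr => ?_)
      have h1 : (0:ℝ) < r := hr.1
      have h2 : r ≤ D := hr.2
      have he : Real.exp (-(c * r ^ α)) ≤ 1 := by
        rw [Real.exp_le_one_iff]
        have : (0:ℝ) ≤ r ^ α := rpow_nonneg h1.le α
        nlinarith
      rw [norm_eq_abs, abs_of_nonneg (by positivity)]
      calc Real.exp (-(c * r ^ α)) * (2*r/D^2) ≤ 1 * (2*D/D^2) :=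
            mul_le_mul he (by gcongr) (by positivity) zero_le_one
          _ = 2*D/D^2 := one_mul _
  · refine (ae_restrict_iff' measurableSet_Ioc).2 (ae_of_all _ fun r hr => ?_)
    have : (0:ℝ) < r := hr.1
    positivity


lemma gamma_laplace {a x : ℝ} (ha : 0 < a) (hx : 0 < x) :
    ∫⁻ s, ENNReal.ofReal (Real.exp (-(x * s))) ∂(gammaMeasure a 1)
      = ENNReal.ofReal ((1+x) ^ (-a)) := by
  have h1x : (0:ℝ) < 1 + x := by linarith
  rw [gammaMeasure, lintegral_withDensity_eq_lintegral_mul _ (by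
      apply ENNReal.measurable_ofReal.comp
      exact measurable_gammaPDFReal a 1) (by
      apply ENNReal.measurable_ofReal.comp
      fun_prop)]
  have hpt : ∀ s : ℝ, (gammaPDF a 1 * fun s => ENNReal.ofReal (Real.exp (-(x * s)))) s
      = ENNReal.ofReal ((1+x) ^ (-a)) * gammaPDF a (1+x) s := by
    intro s
    simp only [Pi.mul_apply]
    rcases le_or_gt 0 s with hs | hs
    · rw [gammaPDF_of_nonneg hs, gammaPDF_of_nonneg hs,
        ← ENNReal.ofReal_mul (by positivity), ← ENNReal.ofReal_mul (by positivity)]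
      congr 1
      rw [one_rpow]
      have hexp : Real.exp (-(1 * s)) * Real.exp (-(x * s)) = Real.exp (-((1+x) * s)) := by
        rw [← Real.exp_add]
        ring_nf
      have hpow : (1+x) ^ (-a) * (1+x) ^ a = 1 := by
        rw [← Real.rpow_add h1x]
        simp
      calc 1 / Real.Gamma a * s ^ (a-1) * Real.exp (-(1 * s)) * Real.exp (-(x * s))
          = ((1+x) ^ (-a) * (1+x) ^ a) * (1 / Real.Gamma a * s ^ (a-1) *
              (Real.exp (-(1*s)) * Real.exp (-(x*s)))) := by rw [hpow]; ring
        _ = (1+x) ^ (-a) * ((1+x) ^ a / Real.Gamma a * s ^ (a-1) * Real.exp (-((1+x) * s))) := by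
            rw [hexp]; ring
    · rw [gammaPDF_of_neg hs, gammaPDF_of_neg hs, zero_mul, mul_zero]
  simp_rw [hpt]
  rw [lintegral_const_mul _ (by
    apply ENNReal.measurable_ofReal.comp
    exact measurable_gammaPDFReal a (1+x)), lintegral_gammaPDF_eq_one ha h1x, mul_one]

lemma exp_tail {t : ℝ} (ht : 0 ≤ t) : expMeasure 1 (Ioi t) = ENNReal.ofReal (Real.exp (-t)) := by
  have : IsProbabilityMeasure (expMeasure 1) := isProbabilityMeasure_expMeasure zero_lt_one
  have hIic : expMeasure 1 (Iic t) = ENNReal.ofReal (1 - Real.exp (-t)) := by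
    rw [expMeasure, gammaMeasure, withDensity_apply _ measurableSet_Iic]
    have := lintegral_exponentialPDF_eq_antiDeriv zero_lt_one t
    rw [if_pos ht, one_mul] at this
    rw [← this]
    rfl
  have hcompl : Ioi t = (Iic t)ᶜ := by simp
  rw [hcompl, measure_compl measurableSet_Iic (measure_ne_top _ _), hIic, measure_univ]
  have hadd : ENNReal.ofReal (1 - Real.exp (-t)) + ENNReal.ofReal (Real.exp (-t)) = 1 := by
    rw [← ENNReal.ofReal_add (by
      have := Real.exp_le_one_iff.mpr (neg_nonpos.mpr ht)
      linarith) (Real.exp_pos _).le]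
    norm_num
  rw [← hadd, ENNReal.add_sub_cancel_left (by simp)]

section
variable {Ω : Type*} [MeasurableSpace Ω] (P : Measure Ω) [IsProbabilityMeasure P]

lemma per_user_bad {M : ℕ} (hM : 2 ≤ M) {ρ D α x : ℝ} (hρ : 0 < ρ) (hD : 0 < D)
    (hα : 2 < α) (hx : 0 < x)
    {R0 E0 S0 : Ω → ℝ} (hRm : Measurable R0) (hEm : Measurable E0) (hSm : Measurable S0)
    (hmapR : P.map R0 = rDens D) (hmapE : P.map E0 = expMeasure 1)
    (hmapS : P.map S0 = gammaMeasure ((M:ℝ)-1) 1)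
    (hIRS : IndepFun R0 S0 P) (hIWE : IndepFun (fun ω => (R0 ω, S0 ω)) E0 P) :
    P {ω | x * ((1 + R0 ω ^ α)/ρ + S0 ω) < E0 ω}
      = ENNReal.ofReal (Real.exp (-(x/ρ)) *
          (2/(α*D^2) * ((x/ρ) ^ (-(2/α)) *
            ∫ u in (0:ℝ)..((x/ρ)*D^α), u^(2/α-1) * Real.exp (-u)) *
          (1+x) ^ (-((M:ℝ)-1)))) := by
  have hα0 : (0:ℝ) < α := by linarith
  have hc : (0:ℝ) < x/ρ := by positivity
  have ha : (0:ℝ) < (M:ℝ) - 1 := by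
    have : (2:ℝ) ≤ (M:ℝ) := by exact_mod_cast hM
    linarith
  set g : ℝ × ℝ → ℝ := fun w => x * ((1 + w.1 ^ α)/ρ + w.2) with hg
  have hgm : Measurable g := by fun_prop
  set W : Ω → ℝ × ℝ := fun ω => (R0 ω, S0 ω) with hW
  have hWm : Measurable W := hRm.prodMk hSm
  have hU : MeasurableSet {p : (ℝ×ℝ)×ℝ | g p.1 < p.2} :=
    measurableSet_lt (hgm.comp measurable_fst) measurable_snd
  have h1 : P {ω | x * ((1 + R0 ω ^ α)/ρ + S0 ω) < E0 ω}
      = (P.map (fun ω => (W ω, E0 ω))) {p : (ℝ×ℝ)×ℝ | g p.1 < p.2} := by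
    rw [Measure.map_apply (hWm.prodMk hEm) hU]
    rfl
  have hprod : P.map (fun ω => (W ω, E0 ω)) = (P.map W).prod (expMeasure 1) := by
    rw [← hmapE]
    exact (indepFun_iff_map_prod_eq_prod_map_map hWm.aemeasurable hEm.aemeasurable).mp hIWE
  have : IsProbabilityMeasure (expMeasure 1) := isProbabilityMeasure_expMeasure zero_lt_one
  rw [h1, hprod, Measure.prod_apply hU]
  have hpre : ∀ w : ℝ × ℝ, (Prod.mk w ⁻¹' {p : (ℝ×ℝ)×ℝ | g p.1 < p.2}) = Ioi (g w) :=
    fun w => rfl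
  simp_rw [hpre]
  -- a.e. positivity of coordinates under P.map W
  have haeW : ∀ᵐ w ∂(P.map W), 0 ≤ w.1 ∧ 0 ≤ w.2 := by
    rw [ae_map_iff hWm.aemeasurable (by
      exact (measurableSet_le measurable_const measurable_fst).inter
        (measurableSet_le measurable_const measurable_snd))]
    have hR0 : ∀ᵐ ω ∂P, 0 ≤ R0 ω := by
      have hnull : P {ω | R0 ω < 0} = 0 := by
        have : P {ω | R0 ω < 0} = (P.map R0) (Iio 0) := by
          rw [Measure.map_apply hRm measurableSet_Iio]; rfl
        rw [this, hmapR]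
        refine measure_mono_null Iio_subset_Iic_self ?_
        rw [rDens, withDensity_apply _ measurableSet_Iic,
          lintegral_indicator measurableSet_Ioc,
          Measure.restrict_restrict measurableSet_Ioc, Ioc_inter_Iic, min_eq_right hD.le,
          Ioc_eq_empty (lt_irrefl 0), Measure.restrict_empty, lintegral_zero_measure]
      rw [ae_iff]
      simpa [not_le] using hnull
    have hS0 : ∀ᵐ ω ∂P, 0 ≤ S0 ω := by
      have hnull : P {ω | S0 ω < 0} = 0 := by
        have : P {ω | S0 ω < 0} = (P.map S0) (Iio 0) := by
          rw [Measure.map_apply hSm measurableSet_Iio]; rfl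
        rw [this, hmapS, gammaMeasure, withDensity_apply _ measurableSet_Iio,
          lintegral_gammaPDF_of_nonpos le_rfl]
      rw [ae_iff]
      simpa [not_le] using hnull
    filter_upwards [hR0, hS0] with ω h1 h2 using ⟨h1, h2⟩
  have hcongr : ∫⁻ w, expMeasure 1 (Ioi (g w)) ∂(P.map W)
      = ∫⁻ w, ENNReal.ofReal (Real.exp (-(g w))) ∂(P.map W) := by
    refine lintegral_congr_ae ?_
    filter_upwards [haeW] with w hw
    refine exp_tail ?_
    have h1 : (0:ℝ) ≤ w.1 ^ α := rpow_nonneg hw.1 α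
    have h2 := hw.2
    rw [hg]
    positivity
  rw [hcongr, lintegral_map (by fun_prop) hWm]
  have hsplit : ∀ ω, ENNReal.ofReal (Real.exp (-(g (W ω))))
      = ENNReal.ofReal (Real.exp (-(x/ρ))) *
        (ENNReal.ofReal (Real.exp (-((x/ρ) * R0 ω ^ α))) *
         ENNReal.ofReal (Real.exp (-(x * S0 ω)))) := by
    intro ω
    rw [← ENNReal.ofReal_mul (Real.exp_pos _).le, ← ENNReal.ofReal_mul (by positivity),
      ← Real.exp_add, ← Real.exp_add]
    congr 2
    rw [hg, hW]
    simp only []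
    field_simp
    ring
  simp_rw [hsplit]
  rw [lintegral_const_mul _ (by fun_prop)]
  have hindc : IndepFun (fun ω => ENNReal.ofReal (Real.exp (-((x/ρ) * R0 ω ^ α))))
      (fun ω => ENNReal.ofReal (Real.exp (-(x * S0 ω)))) P := by
    exact hIRS.comp (φ := fun r : ℝ => ENNReal.ofReal (Real.exp (-((x/ρ) * r ^ α))))
      (ψ := fun s : ℝ => ENNReal.ofReal (Real.exp (-(x * s)))) (by fun_prop) (by fun_prop)
  have hmul := lintegral_mul_eq_lintegral_mul_lintegral_of_indepFun (μ := P)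
    (by fun_prop) (by fun_prop) hindc
  simp only [Pi.mul_apply] at hmul
  rw [hmul]
  rw [← lintegral_map (f := fun r : ℝ => ENNReal.ofReal (Real.exp (-((x/ρ) * r ^ α))))
      (by fun_prop) hRm,
    ← lintegral_map (f := fun s : ℝ => ENNReal.ofReal (Real.exp (-(x * s)))) (by fun_prop) hSm,
    hmapR, hmapS, L_R hD hα hc, gamma_laplace ha hx]
  have hI : (0:ℝ) ≤ ∫ u in (0:ℝ)..((x/ρ)*D^α), u^(2/α-1) * Real.exp (-u) := by
    apply intervalIntegral.integral_nonneg (by positivity)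
    intro u hu
    have := hu.1
    positivity
  have hA : (0:ℝ) ≤ 2/(α*D^2) *
      ((x/ρ) ^ (-(2/α)) * ∫ u in (0:ℝ)..((x/ρ)*D^α), u^(2/α-1) * Real.exp (-u)) := by
    positivity
  rw [← ENNReal.ofReal_mul hA, ← ENNReal.ofReal_mul (Real.exp_pos _).le]

end


lemma block_prod {Ω : Type*} [MeasurableSpace Ω] {P : Measure Ω} [IsProbabilityMeasure P]
    (f : ℕ × Fin 3 → Ω → ℝ) (hfm : ∀ p, Measurable (f p))
    (hiid : iIndepFun f P)
    {q : ℝ → ℝ → ℝ → Prop} (hq : MeasurableSet {v : ℝ × ℝ × ℝ | q v.1 v.2.1 v.2.2}) :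
    ∀ n : ℕ, P (⋂ i ∈ Finset.range n, {ω | q (f (i,0) ω) (f (i,1) ω) (f (i,2) ω)})
      = ∏ i ∈ Finset.range n, P {ω | q (f (i,0) ω) (f (i,1) ω) (f (i,2) ω)} := by
  have hqset : ∀ {δ : Type} [MeasurableSpace δ] (u v w : δ → ℝ), Measurable u → Measurable v →
      Measurable w → MeasurableSet {g : δ | q (u g) (v g) (w g)} := by
    intro δ _ u v w hu hv hw
    exact (hu.prodMk (hv.prodMk hw)) hq
  intro n
  induction n with
  | zero => simp
  | succ n ih =>
    rw [Finset.range_add_one, Finset.set_biInter_insert, Finset.prod_insert (by simp), ← ih]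
    set T : Finset (ℕ × Fin 3) := {n} ×ˢ Finset.univ with hTdef
    set S : Finset (ℕ × Fin 3) := Finset.range n ×ˢ Finset.univ with hSdef
    have hmemT : ∀ k : Fin 3, (n, k) ∈ T := by intro k; simp [hTdef]
    have hmemS : ∀ i : ℕ, i < n → ∀ k : Fin 3, ((i, k) : ℕ × Fin 3) ∈ S := by
      intro i hi k; simp [hSdef, hi]
    have hdisj : Disjoint T S := by
      rw [Finset.disjoint_left]
      rintro ⟨i, k⟩ h1 h2
      simp [hTdef] at h1
      simp [hSdef] at h2
      omega
    have hindep := hiid.indepFun_finset T S hdisj hfm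
    set CT : Set ((j : T) → ℝ) :=
      {g | q (g ⟨(n,0), hmemT 0⟩) (g ⟨(n,1), hmemT 1⟩) (g ⟨(n,2), hmemT 2⟩)} with hCT
    set CS : Set ((j : S) → ℝ) :=
      ⋂ (i : ℕ) (h : i < n), {g | q (g ⟨(i,0), hmemS i h 0⟩) (g ⟨(i,1), hmemS i h 1⟩)
        (g ⟨(i,2), hmemS i h 2⟩)} with hCS
    have hCTm : MeasurableSet CT := by
      rw [hCT]
      exact hqset (δ := (j : T) → ℝ) (fun g => g ⟨(n,0), hmemT 0⟩) (fun g => g ⟨(n,1), hmemT 1⟩)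
        (fun g => g ⟨(n,2), hmemT 2⟩)
        (measurable_pi_apply _) (measurable_pi_apply _) (measurable_pi_apply _)
    have hCSm : MeasurableSet CS := by
      rw [hCS]
      refine MeasurableSet.iInter fun i => MeasurableSet.iInter fun h => ?_
      exact hqset (δ := (j : S) → ℝ) (fun g => g ⟨(i,0), hmemS i h 0⟩) (fun g => g ⟨(i,1), hmemS i h 1⟩)
        (fun g => g ⟨(i,2), hmemS i h 2⟩)
        (measurable_pi_apply _) (measurable_pi_apply _) (measurable_pi_apply _)
    have hTpre : {ω | q (f (n,0) ω) (f (n,1) ω) (f (n,2) ω)}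
        = (fun a (j : T) => f j a) ⁻¹' CT := rfl
    have hSpre : (⋂ i ∈ Finset.range n, {ω | q (f (i,0) ω) (f (i,1) ω) (f (i,2) ω)})
        = (fun a (j : S) => f j a) ⁻¹' CS := by
      ext ω
      simp only [Set.mem_iInter, Set.mem_preimage, hCS, Finset.mem_range, Set.mem_setOf_eq]
    rw [hTpre, hSpre, hindep.measure_inter_preimage_eq_mul _ _ hCTm hCSm]



section
variable {Ω : Type*} [MeasurableSpace Ω] (P : Measure Ω) [IsProbabilityMeasure P]

omit [IsProbabilityMeasure P] in
lemma ae_nonneg_of_gamma {a : ℝ} {S0 : Ω → ℝ} (hSm : Measurable S0)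
    (hmapS : P.map S0 = gammaMeasure a 1) : ∀ᵐ ω ∂P, 0 ≤ S0 ω := by
  have hnull : P {ω | S0 ω < 0} = 0 := by
    have h : P {ω | S0 ω < 0} = (P.map S0) (Iio 0) := by
      rw [Measure.map_apply hSm measurableSet_Iio]; rfl
    rw [h, hmapS, gammaMeasure, withDensity_apply _ measurableSet_Iio,
      lintegral_gammaPDF_of_nonpos le_rfl]
  rw [ae_iff]
  simpa [not_le] using hnull

lemma per_user {M : ℕ} (hM : 2 ≤ M) {ρ D α x : ℝ} (hρ : 0 < ρ) (hD : 0 < D)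
    (hα : 2 < α) (hx : 0 < x)
    {R0 E0 S0 : Ω → ℝ} (hRm : Measurable R0) (hEm : Measurable E0) (hSm : Measurable S0)
    (hmapR : P.map R0 = rDens D) (hmapE : P.map E0 = expMeasure 1)
    (hmapS : P.map S0 = gammaMeasure ((M:ℝ)-1) 1)
    (hIRS : IndepFun R0 S0 P) (hIWE : IndepFun (fun ω => (R0 ω, S0 ω)) E0 P) :
    P {ω | E0 ω / ((1 + R0 ω ^ α)/ρ + S0 ω) ≤ x}
      = 1 - ENNReal.ofReal (Real.exp (-(x/ρ)) *
          (2/(α*D^2) * ((x/ρ) ^ (-(2/α)) *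
            ∫ u in (0:ℝ)..((x/ρ)*D^α), u^(2/α-1) * Real.exp (-u)) *
          (1+x) ^ (-((M:ℝ)-1)))) := by
  have hRae : ∀ᵐ ω ∂P, 0 ≤ R0 ω := by
    have hnull : P {ω | R0 ω < 0} = 0 := by
      have h : P {ω | R0 ω < 0} = (P.map R0) (Iio 0) := by
        rw [Measure.map_apply hRm measurableSet_Iio]; rfl
      rw [h, hmapR]
      refine measure_mono_null Iio_subset_Iic_self ?_
      rw [rDens, withDensity_apply _ measurableSet_Iic,
        lintegral_indicator measurableSet_Ioc,
        Measure.restrict_restrict measurableSet_Ioc, Ioc_inter_Iic, min_eq_right hD.le,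
        Ioc_eq_empty (lt_irrefl 0), Measure.restrict_empty, lintegral_zero_measure]
    rw [ae_iff]
    simpa [not_le] using hnull
  have hSae : ∀ᵐ ω ∂P, 0 ≤ S0 ω := ae_nonneg_of_gamma P hSm hmapS
  set Bad : Set Ω := {ω | x * ((1 + R0 ω ^ α)/ρ + S0 ω) < E0 ω} with hBad
  have hBadm : MeasurableSet Bad := measurableSet_lt (by fun_prop) hEm
  have hcongr : ({ω | E0 ω / ((1 + R0 ω ^ α)/ρ + S0 ω) ≤ x} : Set Ω) =ᵐ[P] (Badᶜ : Set Ω) := by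
    rw [Filter.eventuallyEq_set]
    filter_upwards [hRae, hSae] with ω h1 h2
    have hT : (0:ℝ) < (1 + R0 ω ^ α)/ρ + S0 ω := by
      have : (0:ℝ) ≤ R0 ω ^ α := rpow_nonneg h1 α
      positivity
    simp only [Set.mem_setOf_eq, Set.mem_compl_iff, hBad, not_lt, div_le_iff₀ hT]
  rw [measure_congr hcongr, measure_compl hBadm (measure_ne_top _ _), measure_univ,
    per_user_bad P hM hρ hD hα hx hRm hEm hSm hmapR hmapE hmapS hIRS hIWE]

end

lemma poisson_sum {μ p : ℝ} (hμ : 0 ≤ μ) (hp0 : 0 ≤ p) :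
    ∑' n : ℕ, (Real.exp (-μ) * μ^n / n.factorial) * p^n = Real.exp (-(μ * (1 - p))) := by
  have h := NormedSpace.expSeries_div_hasSum_exp (μ * p)
  have hpt : ∀ n : ℕ, (Real.exp (-μ) * μ^n / n.factorial) * p^n
      = Real.exp (-μ) * ((μ*p)^n / n.factorial) := by
    intro n
    rw [mul_pow]
    ring
  simp_rw [hpt]
  rw [tsum_mul_left, h.tsum_eq, ← Real.exp_eq_exp_ℝ, ← Real.exp_add]
  congr 1
  ring

/-- Lemma 2 (beam outage probability, bounded path loss `G(d) = (1+d^α)⁻¹`). With a Poisson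
number `N` of users (mean `λπD²`), i.i.d. distances `R i` with CDF `(r/D)²` on `[0,D]`,
i.i.d. `Exp(1)` signal powers and i.i.d. `Gamma(M-1,1)` interference powers, all mutually
independent and independent of `N`, the probability that all beam SINRs
`E i / ((1 + R i^α) / ρ + S i)` are at most `x` equals
`exp(-(2λπ/α) e^{-x/ρ} (x+1)^{1-M} (ρ/x)^{2/α} γ_inc(2/α, x D^α / ρ))`. -/
theorem beam_outage_probability_bounded
    {Ω : Type*} [MeasurableSpace Ω] (P : Measure Ω) [IsProbabilityMeasure P]
    (M : ℕ) (hM : 2 ≤ M) (lam ρ D α : ℝ) (hlam : 0 < lam) (hρ : 0 < ρ) (hD : 0 < D)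
    (hα : 2 < α)
    (N : Ω → ℕ) (hNm : Measurable N)
    (hN : P.map N = poissonMeasure ((lam * π * D ^ 2).toNNReal))
    (R E S : ℕ → Ω → ℝ)
    (hRm : ∀ i, Measurable (R i)) (hEm : ∀ i, Measurable (E i)) (hSm : ∀ i, Measurable (S i))
    (hR : ∀ i, ∀ r ∈ Set.Icc (0 : ℝ) D, (P {ω | R i ω ≤ r}).toReal = (r / D) ^ 2)
    (hE : ∀ i, P.map (E i) = expMeasure 1)
    (hS : ∀ i, P.map (S i) = gammaMeasure ((M : ℝ) - 1) 1)
    (hiid : iIndepFun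
        (fun (p : ℕ × Fin 3) => ![R p.1, E p.1, S p.1] p.2) P)
    (hNind : IndepFun N (fun ω (p : ℕ × Fin 3) => ![R p.1, E p.1, S p.1] p.2 ω) P) :
    ∀ x : ℝ, 0 < x →
      (P {ω | ∀ i < N ω, E i ω / ((1 + R i ω ^ α) / ρ + S i ω) ≤ x}).toReal
        = Real.exp (-(2 * lam * π / α) * Real.exp (-x / ρ) * (x + 1) ^ ((1 : ℝ) - M) *
            (ρ / x) ^ (2 / α) *
            ∫ u in (0 : ℝ)..(x * D ^ α / ρ), u ^ (2 / α - 1) * Real.exp (-u)) := by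
  intro x hx
  have hα0 : (0:ℝ) < α := by linarith
  set f : ℕ × Fin 3 → Ω → ℝ := fun p => ![R p.1, E p.1, S p.1] p.2 with hfdef
  have hfm : ∀ p, Measurable (f p) := by
    rintro ⟨i, k⟩
    fin_cases k
    · exact hRm i
    · exact hEm i
    · exact hSm i
  set q : ℝ := Real.exp (-(x/ρ)) *
      (2/(α*D^2) * ((x/ρ) ^ (-(2/α)) *
        ∫ u in (0:ℝ)..((x/ρ)*D^α), u^(2/α-1) * Real.exp (-u)) *
      (1+x) ^ (-((M:ℝ)-1))) with hqdef
  have hI : (0:ℝ) ≤ ∫ u in (0:ℝ)..((x/ρ)*D^α), u^(2/α-1) * Real.exp (-u) := by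
    apply intervalIntegral.integral_nonneg (by positivity)
    intro u hu
    have := hu.1
    positivity
  have hq0 : 0 ≤ q := by
    rw [hqdef]
    have h1 : (0:ℝ) ≤ (x/ρ) ^ (-(2/α)) := rpow_nonneg (by positivity) _
    have h2 : (0:ℝ) ≤ (1+x) ^ (-((M:ℝ)-1)) := rpow_nonneg (by linarith) _
    positivity
  -- per-user probability
  have hPA : ∀ i : ℕ, P {ω | E i ω / ((1 + R i ω ^ α)/ρ + S i ω) ≤ x}
      = 1 - ENNReal.ofReal q := by
    intro i
    have hIRS : IndepFun (R i) (S i) P :=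
      hiid.indepFun (show ((i, (0:Fin 3))) ≠ (i, 2) by simp [Prod.ext_iff])
    have hIWE : IndepFun (fun ω => (R i ω, S i ω)) (E i) P :=
      hiid.indepFun_prodMk hfm (i,0) (i,2) (i,1) (by simp [Prod.ext_iff]) (by simp [Prod.ext_iff])
    exact per_user P hM hρ hD hα hx (hRm i) (hEm i) (hSm i)
      (map_eq_rDens P hD (hRm i) (hR i)) (hE i) (hS i) hIRS hIWE
  have hq1 : ENNReal.ofReal q ≤ 1 := by
    have hb := per_user_bad P hM hρ hD hα hx (hRm 0) (hEm 0) (hSm 0)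
      (map_eq_rDens P hD (hRm 0) (hR 0)) (hE 0) (hS 0)
      (hiid.indepFun (show ((0:ℕ), (0:Fin 3)) ≠ (0, 2) by simp [Prod.ext_iff]))
      (hiid.indepFun_prodMk hfm (0,0) (0,2) (0,1) (by simp [Prod.ext_iff]) (by simp [Prod.ext_iff]))
    rw [← hqdef] at hb
    rw [← hb]
    exact prob_le_one
  have hq1' : q ≤ 1 := ENNReal.ofReal_le_one.mp hq1
  -- events
  set A : ℕ → Set Ω := fun i => {ω | E i ω / ((1 + R i ω ^ α)/ρ + S i ω) ≤ x} with hAdef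
  have hAm : ∀ i, MeasurableSet (A i) :=
    fun i => measurableSet_le (by fun_prop) measurable_const
  set B : ℕ → Set Ω := fun n => N ⁻¹' {n} ∩ ⋂ i ∈ Finset.range n, A i with hBdef
  have hBm : ∀ n, MeasurableSet (B n) := fun n =>
    (hNm (measurableSet_singleton n)).inter
      (MeasurableSet.biInter (Set.to_countable _) (fun i _ => hAm i))
  have hdecomp : {ω | ∀ i < N ω, E i ω / ((1 + R i ω ^ α)/ρ + S i ω) ≤ x} = ⋃ n, B n := by
    ext ω
    simp only [Set.mem_setOf_eq, Set.mem_iUnion, hBdef, Set.mem_inter_iff, Set.mem_preimage,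
      Set.mem_singleton_iff, Set.mem_iInter, Finset.mem_range, hAdef]
    constructor
    · intro h
      exact ⟨N ω, rfl, fun i hi => h i hi⟩
    · rintro ⟨n, rfl, h⟩
      exact h
  have hdisj : Pairwise (Function.onFun Disjoint B) := by
    intro m n hmn
    refine Set.disjoint_left.mpr ?_
    rintro ω ⟨h1, -⟩ ⟨h2, -⟩
    exact hmn (h1.symm.trans h2)
  -- independence N vs rest
  have hCm : ∀ n : ℕ, MeasurableSet {g : ℕ × Fin 3 → ℝ |
      ∀ i < n, g (i,1) / ((1 + g (i,0) ^ α)/ρ + g (i,2)) ≤ x} := by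
    intro n
    have : {g : ℕ × Fin 3 → ℝ | ∀ i < n, g (i,1) / ((1 + g (i,0) ^ α)/ρ + g (i,2)) ≤ x}
        = ⋂ (i : ℕ) (_ : i < n), {g : ℕ × Fin 3 → ℝ |
            g (i,1) / ((1 + g (i,0) ^ α)/ρ + g (i,2)) ≤ x} := by
      ext g; simp [Set.mem_iInter]
    rw [this]
    refine MeasurableSet.iInter fun i => MeasurableSet.iInter fun _ => ?_
    exact measurableSet_le (by fun_prop) measurable_const
  have hBn : ∀ n, P (B n) = P (N ⁻¹' {n}) * P (⋂ i ∈ Finset.range n, A i) := by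
    intro n
    have hpre : (⋂ i ∈ Finset.range n, A i)
        = (fun ω (p : ℕ × Fin 3) => ![R p.1, E p.1, S p.1] p.2 ω) ⁻¹'
          {g : ℕ × Fin 3 → ℝ | ∀ i < n, g (i,1) / ((1 + g (i,0) ^ α)/ρ + g (i,2)) ≤ x} := by
      ext ω
      simp only [Set.mem_iInter, Finset.mem_range, Set.mem_preimage, Set.mem_setOf_eq, hAdef]
      rfl
    rw [hBdef]
    simp only []
    rw [hpre, hNind.measure_inter_preimage_eq_mul _ _ (measurableSet_singleton n) (hCm n)]
  have hprod : ∀ n, P (⋂ i ∈ Finset.range n, A i) = (1 - ENNReal.ofReal q)^n := by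
    intro n
    have hqset : MeasurableSet {v : ℝ × ℝ × ℝ | v.2.1 / ((1 + v.1 ^ α)/ρ + v.2.2) ≤ x} :=
      measurableSet_le (by fun_prop) measurable_const
    have hb := block_prod f hfm hiid
      (q := fun a b c => b / ((1 + a ^ α)/ρ + c) ≤ x) hqset n
    have hb2 : P (⋂ i ∈ Finset.range n, A i) = ∏ i ∈ Finset.range n, P (A i) := hb
    rw [hb2, Finset.prod_congr rfl (fun i _ => hPA i), Finset.prod_const, Finset.card_range]
  -- Poisson pmf values
  set r : NNReal := (lam * π * D ^ 2).toNNReal with hrdef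
  have hNn : ∀ n, P (N ⁻¹' {n}) = ENNReal.ofReal (poissonPMFReal r n) := by
    intro n
    rw [← Measure.map_apply hNm (measurableSet_singleton n), hN, poissonMeasure,
      Measure.sum_smul_dirac_singleton]
    rfl
  have hsum : P {ω | ∀ i < N ω, E i ω / ((1 + R i ω ^ α)/ρ + S i ω) ≤ x}
      = ∑' n : ℕ, ENNReal.ofReal (poissonPMFReal r n) * (1 - ENNReal.ofReal q)^n := by
    rw [hdecomp, measure_iUnion hdisj hBm]
    exact tsum_congr fun n => by rw [hBn n, hNn n, hprod n]
  rw [hsum]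
  have hterm_ne : ∀ n : ℕ,
      ENNReal.ofReal (poissonPMFReal r n) * (1 - ENNReal.ofReal q)^n ≠ ⊤ := by
    intro n
    exact ENNReal.mul_ne_top ENNReal.ofReal_ne_top
      (ENNReal.pow_ne_top (ne_top_of_le_ne_top ENNReal.one_ne_top tsub_le_self))
  rw [ENNReal.tsum_toReal_eq hterm_ne]
  have htr : ∀ n : ℕ, (ENNReal.ofReal (poissonPMFReal r n) * (1 - ENNReal.ofReal q)^n).toReal
      = (Real.exp (-(r:ℝ)) * (r:ℝ)^n / n.factorial) * (1-q)^n := by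
    intro n
    rw [ENNReal.toReal_mul, ENNReal.toReal_pow,
      ENNReal.toReal_ofReal poissonPMFReal_nonneg,
      ENNReal.toReal_sub_of_le hq1 ENNReal.one_ne_top, ENNReal.toReal_one,
      ENNReal.toReal_ofReal hq0]
    rfl
  have hrval : ((r:NNReal):ℝ) = lam * π * D^2 := Real.coe_toNNReal _ (by positivity)
  rw [tsum_congr htr, poisson_sum (by rw [hrval]; positivity) (by linarith), sub_sub_cancel]
  congr 1
  rw [hrval, hqdef]
  have e1 : (x/ρ) ^ (-(2/α)) = (ρ/x) ^ (2/α) := by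
    rw [Real.rpow_neg (by positivity), show ρ/x = (x/ρ)⁻¹ from (inv_div x ρ).symm,
      Real.inv_rpow (by positivity)]
  have e2 : ((1:ℝ)+x) ^ (-((M:ℝ)-1)) = (x+1) ^ ((1:ℝ) - M) := by
    rw [add_comm (1:ℝ) x]
    congr 1
    ring
  have e3 : x/ρ*D^α = x*D^α/ρ := by ring
  have e4 : Real.exp (-(x/ρ)) = Real.exp (-x/ρ) := by rw [neg_div]
  rw [e1, e2, e3, e4]
  field_simp
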